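/- Let v and w be vertices of a graph G, with a common neighbourhood structure arising from contraction: let G′ be obtained from G by contracting the edge (v,w) to a new vertex x. If G has an EPG-representation in which path(v) and path(w) are closed grid paths (cycles) sharing exactly one grid-edge e, and e belongs to no other vertex-path, then replacing path(v) and path(w) by the closed path (path(v) ∪ path(w)) ∖ {e} yields an EPG-representation of G′ (with closed vertex-paths). -/

import Mathlib

/-- Two grid points are adjacent (at distance 1). -/
def adjPt (p q : ℤ × ℤ) : Prop :=
  (p.1 = q.1 ∧ (p.2 - q.2 = 1 ∨ q.2 - p.2 = 1)) ∨
  (p.2 = q.2 ∧ (p.1 - q.1 = 1 ∨ q.1 - p.1 = 1))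

/-- A (simple) path in the rectangular integer grid. -/
structure GridPath where
  len : ℕ
  pts : Fin (len + 1) → ℤ × ℤ
  adj : ∀ i : Fin len, adjPt (pts i.castSucc) (pts i.succ)
  inj : Function.Injective pts

/-- The set of grid-edges used by a grid path. -/
def GridPath.edges (P : GridPath) : Set (Sym2 (ℤ × ℤ)) :=
  {e | ∃ i : Fin P.len, e = s(P.pts i.castSucc, P.pts i.succ)}

/-- The set of grid-points used by a grid path. -/
def GridPath.points (P : GridPath) : Set (ℤ × ℤ) :=
  Set.range P.pts

/-- The grid path lies inside the `w × h` grid. -/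
def GridPath.InGrid (P : GridPath) (w h : ℕ) : Prop :=
  ∀ p ∈ P.points, 1 ≤ p.1 ∧ p.1 ≤ (w : ℤ) ∧ 1 ≤ p.2 ∧ p.2 ≤ (h : ℤ)

/-- An EPG-representation: vertices are adjacent iff their paths share a grid-edge. -/
def IsEPGRep {V : Type*} (G : SimpleGraph V) (rep : V → GridPath) : Prop :=
  ∀ v w : V, G.Adj v w ↔ v ≠ w ∧ ((rep v).edges ∩ (rep w).edges).Nonempty


/-- A closed path (closed trail) in the rectangular grid: a cyclic sequence of grid
points with consecutive points adjacent and no repeated grid-edge. -/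
structure GridCycle where
  len : ℕ
  pts : ℕ → ℤ × ℤ
  closed : pts len = pts 0
  adj : ∀ i < len, adjPt (pts i) (pts (i + 1))
  edgeInj : ∀ i < len, ∀ j < len,
    s(pts i, pts (i + 1)) = s(pts j, pts (j + 1)) → i = j

/-- The set of grid-edges used by a closed grid path. -/
def GridCycle.edges (C : GridCycle) : Set (Sym2 (ℤ × ℤ)) :=
  {e | ∃ i < C.len, e = s(C.pts i, C.pts (i + 1))}

/-- An EPG-representation with closed vertex-paths. -/
def IsClosedEPGRep {V : Type*} (G : SimpleGraph V) (rep : V → GridCycle) : Prop :=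
  ∀ a b : V, G.Adj a b ↔ a ≠ b ∧ ((rep a).edges ∩ (rep b).edges).Nonempty

/-- Contracting the edge `(v,w)` in an EPG-representation with closed vertex-paths:
if `path(v)` and `path(w)` share exactly the grid-edge `e`, which belongs to no other
vertex-path, then replacing them by the closed path `(path(v) ∪ path(w)) \ {e}`
yields an EPG-representation (with closed vertex-paths) of the contracted graph. -/

private lemma adjPt_symm' {p q : ℤ × ℤ} (h : adjPt p q) : adjPt q p := by
  unfold adjPt at h ⊢
  omega

private lemma adjPt_irrefl' (p : ℤ × ℤ) : ¬ adjPt p p := by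
  unfold adjPt
  omega

namespace GridCycle

lemma two_le_len (C : GridCycle) (h : 0 < C.len) : 2 ≤ C.len := by
  by_contra hc
  have h1 : C.len = 1 := by omega
  have h2 := C.adj 0 (by omega)
  rw [show (0:ℕ) + 1 = C.len by omega, C.closed] at h2
  exact adjPt_irrefl' _ h2

lemma pts_mod_succ (C : GridCycle) {t : ℕ} (ht : t < C.len) :
    C.pts ((t + 1) % C.len) = C.pts (t + 1) := by
  rcases Nat.lt_or_ge (t + 1) C.len with h | h
  · rw [Nat.mod_eq_of_lt h]
  · rw [show t + 1 = C.len by omega, Nat.mod_self, C.closed]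

lemma succ_mod (C : GridCycle) (h2 : 2 ≤ C.len) (a : ℕ) :
    (a + 1) % C.len = (a % C.len + 1) % C.len := by
  rw [Nat.add_mod a 1 C.len, Nat.mod_eq_of_lt (show 1 < C.len by omega)]

def rotate (C : GridCycle) (r : ℕ) (h : 0 < C.len) : GridCycle where
  len := C.len
  pts := fun k => C.pts ((r + k) % C.len)
  closed := by simp [Nat.add_mod_right]
  adj := by
    intro i hi
    have h2 := C.two_le_len h
    show adjPt (C.pts ((r + i) % C.len)) (C.pts ((r + (i + 1)) % C.len))
    rw [show r + (i + 1) = (r + i) + 1 by omega, C.succ_mod h2,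
      C.pts_mod_succ (Nat.mod_lt _ h)]
    exact C.adj _ (Nat.mod_lt _ h)
  edgeInj := by
    intro i hi j hj hij
    have h2 := C.two_le_len h
    have key : ∀ k : ℕ, s(C.pts ((r + k) % C.len), C.pts ((r + (k + 1)) % C.len))
        = s(C.pts ((r + k) % C.len), C.pts ((r + k) % C.len + 1)) := by
      intro k
      rw [show r + (k + 1) = (r + k) + 1 by omega, C.succ_mod h2,
        C.pts_mod_succ (Nat.mod_lt _ h)]
    have hij' : s(C.pts ((r + i) % C.len), C.pts ((r + (i + 1)) % C.len))
        = s(C.pts ((r + j) % C.len), C.pts ((r + (j + 1)) % C.len)) := hij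
    rw [key i, key j] at hij'
    have h3 : (r + i) % C.len = (r + j) % C.len :=
      C.edgeInj _ (Nat.mod_lt _ h) _ (Nat.mod_lt _ h) hij'
    have h4 : i % C.len = j % C.len := Nat.ModEq.add_left_cancel' r h3
    rwa [Nat.mod_eq_of_lt hi, Nat.mod_eq_of_lt hj] at h4

lemma rotate_edge (C : GridCycle) (r : ℕ) (h : 0 < C.len) (k : ℕ) :
    s((C.rotate r h).pts k, (C.rotate r h).pts (k + 1)) =
      s(C.pts ((r + k) % C.len), C.pts ((r + k) % C.len + 1)) := by
  show s(C.pts ((r + k) % C.len), C.pts ((r + (k + 1)) % C.len)) = _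
  rw [show r + (k + 1) = (r + k) + 1 by omega, C.succ_mod (C.two_le_len h),
    C.pts_mod_succ (Nat.mod_lt _ h)]

lemma edges_rotate (C : GridCycle) (r : ℕ) (h : 0 < C.len) :
    (C.rotate r h).edges = C.edges := by
  ext x
  constructor
  · rintro ⟨k, hk, rfl⟩
    exact ⟨(r + k) % C.len, Nat.mod_lt _ h, rotate_edge C r h k⟩
  · rintro ⟨t, ht, rfl⟩
    have hsurj : Function.Surjective
        (fun k : Fin C.len => (⟨(r + k) % C.len, Nat.mod_lt _ h⟩ : Fin C.len)) := by
      apply Finite.injective_iff_surjective.mp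
      intro a b hab
      have h3 : (r + (a : ℕ)) % C.len = (r + (b : ℕ)) % C.len := congrArg Fin.val hab
      have h4 : (a : ℕ) % C.len = (b : ℕ) % C.len := Nat.ModEq.add_left_cancel' r h3
      rw [Nat.mod_eq_of_lt a.isLt, Nat.mod_eq_of_lt b.isLt] at h4
      exact Fin.ext h4
    obtain ⟨k, hk⟩ := hsurj ⟨t, ht⟩
    refine ⟨(k : ℕ), k.isLt, ?_⟩
    have hkv : (r + (k : ℕ)) % C.len = t := congrArg Fin.val hk
    rw [rotate_edge C r h (k : ℕ), hkv]

def reverse (C : GridCycle) : GridCycle where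
  len := C.len
  pts := fun k => C.pts (C.len - k % C.len)
  closed := by simp [Nat.mod_self, Nat.zero_mod]
  adj := by
    intro i hi
    show adjPt (C.pts (C.len - i % C.len)) (C.pts (C.len - (i + 1) % C.len))
    rw [Nat.mod_eq_of_lt hi]
    rcases Nat.lt_or_ge (i + 1) C.len with h | h
    · rw [Nat.mod_eq_of_lt h]
      have ha := C.adj (C.len - i - 1) (by omega)
      rw [show C.len - i - 1 + 1 = C.len - i by omega] at ha
      rw [show C.len - (i + 1) = C.len - i - 1 by omega]
      exact adjPt_symm' ha
    · rw [show (i + 1) % C.len = 0 by rw [show i + 1 = C.len by omega, Nat.mod_self],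
        Nat.sub_zero, show C.len - i = 1 by omega, C.closed]
      exact adjPt_symm' (C.adj 0 (by omega))
  edgeInj := by
    intro i hi j hj hij
    have key : ∀ k, k < C.len →
        s(C.pts (C.len - k % C.len), C.pts (C.len - (k + 1) % C.len))
          = s(C.pts (C.len - 1 - k), C.pts (C.len - k)) := by
      intro k hk
      rw [Nat.mod_eq_of_lt hk]
      rcases Nat.lt_or_ge (k + 1) C.len with h | h
      · rw [Nat.mod_eq_of_lt h, show C.len - (k + 1) = C.len - 1 - k by omega]
        exact Sym2.eq_swap
      · rw [show (k + 1) % C.len = 0 by rw [show k + 1 = C.len by omega, Nat.mod_self],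
          Nat.sub_zero, C.closed, show C.len - k = 1 by omega,
          show C.len - 1 - k = 0 by omega]
        exact Sym2.eq_swap
    have hij' : s(C.pts (C.len - i % C.len), C.pts (C.len - (i + 1) % C.len))
        = s(C.pts (C.len - j % C.len), C.pts (C.len - (j + 1) % C.len)) := hij
    rw [key i hi, key j hj, show C.len - i = C.len - 1 - i + 1 by omega,
      show C.len - j = C.len - 1 - j + 1 by omega] at hij'
    have := C.edgeInj _ (show C.len - 1 - i < C.len by omega) _
      (show C.len - 1 - j < C.len by omega) hij'
    omega

lemma reverse_edge (C : GridCycle) {k : ℕ} (hk : k < C.len) :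
    s((C.reverse).pts k, (C.reverse).pts (k + 1))
      = s(C.pts (C.len - 1 - k), C.pts (C.len - k)) := by
  show s(C.pts (C.len - k % C.len), C.pts (C.len - (k + 1) % C.len)) = _
  rw [Nat.mod_eq_of_lt hk]
  rcases Nat.lt_or_ge (k + 1) C.len with h | h
  · rw [Nat.mod_eq_of_lt h, show C.len - (k + 1) = C.len - 1 - k by omega]
    exact Sym2.eq_swap
  · rw [show (k + 1) % C.len = 0 by rw [show k + 1 = C.len by omega, Nat.mod_self],
      Nat.sub_zero, C.closed, show C.len - k = 1 by omega,
      show C.len - 1 - k = 0 by omega]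
    exact Sym2.eq_swap

lemma edges_reverse (C : GridCycle) : (C.reverse).edges = C.edges := by
  ext x
  constructor
  · rintro ⟨k, hk, rfl⟩
    have hk' : k < C.len := hk
    refine ⟨C.len - 1 - k, show C.len - 1 - k < C.len by omega, ?_⟩
    rw [reverse_edge C hk', show C.len - k = C.len - 1 - k + 1 by omega]
  · rintro ⟨t, ht, rfl⟩
    refine ⟨C.len - 1 - t, show C.len - 1 - t < C.len by omega, ?_⟩
    rw [reverse_edge C (show C.len - 1 - t < C.len by omega),
      show C.len - 1 - (C.len - 1 - t) = t by omega,
      show C.len - (C.len - 1 - t) = t + 1 by omega]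

def spliceFun (P Q : GridCycle) : ℕ → ℤ × ℤ := fun k =>
  if k < P.len then P.pts (k + 1) else Q.pts (P.len + Q.len - 1 - k)

lemma spliceFun_edge (P Q : GridCycle) (hn : 0 < P.len) (hm : 2 ≤ Q.len)
    (ha : P.pts 0 = Q.pts 0) {i : ℕ} (hi : i < P.len + Q.len - 2) :
    s(spliceFun P Q i, spliceFun P Q (i + 1)) =
      if i < P.len - 1 then s(P.pts (i + 1), P.pts (i + 1 + 1))
      else s(Q.pts (P.len + Q.len - 2 - i), Q.pts (P.len + Q.len - 2 - i + 1)) := by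
  unfold spliceFun
  by_cases h1 : i < P.len - 1
  · rw [if_pos h1, if_pos (show i < P.len by omega), if_pos (show i + 1 < P.len by omega)]
  · rw [if_neg h1]
    by_cases h2 : i < P.len
    · rw [if_pos h2, if_neg (show ¬ i + 1 < P.len by omega),
        show P.len + Q.len - 1 - (i + 1) = Q.len - 1 by omega,
        show i + 1 = P.len by omega,
        show P.len + Q.len - 2 - i = Q.len - 1 by omega,
        show Q.len - 1 + 1 = Q.len by omega, P.closed, ha, ← Q.closed]
      exact Sym2.eq_swap
    · rw [if_neg h2, if_neg (show ¬ i + 1 < P.len by omega),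
        show P.len + Q.len - 1 - (i + 1) = P.len + Q.len - 2 - i by omega,
        show P.len + Q.len - 1 - i = P.len + Q.len - 2 - i + 1 by omega]
      exact Sym2.eq_swap

def splice (P Q : GridCycle) (hn : 0 < P.len) (hm : 2 ≤ Q.len)
    (ha : P.pts 0 = Q.pts 0) (hb : P.pts 1 = Q.pts 1)
    (e : Sym2 (ℤ × ℤ)) (he : s(P.pts 0, P.pts 1) = e)
    (hint : P.edges ∩ Q.edges ⊆ {e}) : GridCycle where
  len := P.len + Q.len - 2
  pts := spliceFun P Q
  closed := by
    show spliceFun P Q (P.len + Q.len - 2) = spliceFun P Q 0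
    unfold spliceFun
    rw [if_neg (show ¬ P.len + Q.len - 2 < P.len by omega), if_pos hn,
      show P.len + Q.len - 1 - (P.len + Q.len - 2) = 1 by omega, ← hb]
  adj := by
    intro i hi
    have hi' : i < P.len + Q.len - 2 := hi
    show adjPt (spliceFun P Q i) (spliceFun P Q (i + 1))
    unfold spliceFun
    by_cases h1 : i + 1 < P.len
    · rw [if_pos (show i < P.len by omega), if_pos h1]
      exact P.adj (i + 1) h1
    · by_cases h2 : i < P.len
      · rw [if_pos h2, if_neg h1,
          show P.len + Q.len - 1 - (i + 1) = Q.len - 1 by omega,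
          show i + 1 = P.len by omega, P.closed, ha, ← Q.closed]
        have h3 := Q.adj (Q.len - 1) (by omega)
        rw [show Q.len - 1 + 1 = Q.len by omega] at h3
        exact adjPt_symm' h3
      · rw [if_neg h2, if_neg h1,
          show P.len + Q.len - 1 - (i + 1) = P.len + Q.len - 2 - i by omega,
          show P.len + Q.len - 1 - i = P.len + Q.len - 2 - i + 1 by omega]
        exact adjPt_symm' (Q.adj _ (show P.len + Q.len - 2 - i < Q.len by omega))
  edgeInj := by
    intro i hi j hj hij
    have hi' : i < P.len + Q.len - 2 := hi
    have hj' : j < P.len + Q.len - 2 := hj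
    have hij' : s(spliceFun P Q i, spliceFun P Q (i + 1))
        = s(spliceFun P Q j, spliceFun P Q (j + 1)) := hij
    rw [spliceFun_edge P Q hn hm ha hi', spliceFun_edge P Q hn hm ha hj'] at hij'
    by_cases h1 : i < P.len - 1 <;> by_cases h2 : j < P.len - 1
    · rw [if_pos h1, if_pos h2] at hij'
      have := P.edgeInj (i + 1) (by omega) (j + 1) (by omega) hij'
      omega
    · rw [if_pos h1, if_neg h2] at hij'
      exfalso
      have hmem : s(P.pts (i + 1), P.pts (i + 1 + 1)) ∈ P.edges ∩ Q.edges :=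
        ⟨⟨i + 1, by omega, rfl⟩, ⟨P.len + Q.len - 2 - j, by omega, hij'⟩⟩
      have hxe : s(P.pts (i + 1), P.pts (i + 1 + 1)) = e := hint hmem
      rw [← he] at hxe
      have := P.edgeInj (i + 1) (by omega) 0 (by omega) hxe
      omega
    · rw [if_neg h1, if_pos h2] at hij'
      exfalso
      have hmem : s(P.pts (j + 1), P.pts (j + 1 + 1)) ∈ P.edges ∩ Q.edges :=
        ⟨⟨j + 1, by omega, rfl⟩, ⟨P.len + Q.len - 2 - i, by omega, hij'.symm⟩⟩
      have hxe : s(P.pts (j + 1), P.pts (j + 1 + 1)) = e := hint hmem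
      rw [← he] at hxe
      have := P.edgeInj (j + 1) (by omega) 0 (by omega) hxe
      omega
    · rw [if_neg h1, if_neg h2] at hij'
      have := Q.edgeInj (P.len + Q.len - 2 - i) (by omega)
        (P.len + Q.len - 2 - j) (by omega) hij'
      omega

lemma edges_splice (P Q : GridCycle) (hn : 0 < P.len) (hm : 2 ≤ Q.len)
    (ha : P.pts 0 = Q.pts 0) (hb : P.pts 1 = Q.pts 1)
    (e : Sym2 (ℤ × ℤ)) (he : s(P.pts 0, P.pts 1) = e)
    (hint : P.edges ∩ Q.edges ⊆ {e}) :
    (splice P Q hn hm ha hb e he hint).edges = (P.edges ∪ Q.edges) \ {e} := by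
  have heQ : s(Q.pts 0, Q.pts 1) = e := by rw [← ha, ← hb]; exact he
  ext x
  constructor
  · rintro ⟨i, hi, rfl⟩
    have hi' : i < P.len + Q.len - 2 := hi
    show s(spliceFun P Q i, spliceFun P Q (i + 1)) ∈ (P.edges ∪ Q.edges) \ {e}
    rw [spliceFun_edge P Q hn hm ha hi']
    by_cases h1 : i < P.len - 1
    · rw [if_pos h1]
      refine ⟨Or.inl ⟨i + 1, by omega, rfl⟩, ?_⟩
      intro hxe
      have hxe' : s(P.pts (i + 1), P.pts (i + 1 + 1)) = e := hxe
      rw [← he] at hxe'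
      have := P.edgeInj (i + 1) (by omega) 0 (by omega) hxe'
      omega
    · rw [if_neg h1]
      refine ⟨Or.inr ⟨P.len + Q.len - 2 - i, by omega, rfl⟩, ?_⟩
      intro hxe
      have hxe' : s(Q.pts (P.len + Q.len - 2 - i), Q.pts (P.len + Q.len - 2 - i + 1)) = e := hxe
      rw [← heQ] at hxe'
      have := Q.edgeInj (P.len + Q.len - 2 - i) (by omega) 0 (by omega) hxe'
      omega
  · rintro ⟨hmem, hne⟩
    have hne' : x ≠ e := hne
    rcases hmem with ⟨t, ht, rfl⟩ | ⟨t, ht, rfl⟩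
    · have ht0 : t ≠ 0 := by
        rintro rfl
        exact hne' he
      refine ⟨t - 1, show t - 1 < P.len + Q.len - 2 by omega, ?_⟩
      show s(P.pts t, P.pts (t + 1)) = s(spliceFun P Q (t - 1), spliceFun P Q (t - 1 + 1))
      rw [spliceFun_edge P Q hn hm ha (show t - 1 < P.len + Q.len - 2 by omega),
        if_pos (show t - 1 < P.len - 1 by omega), show t - 1 + 1 = t by omega]
    · have ht0 : t ≠ 0 := by
        rintro rfl
        exact hne' heQ
      refine ⟨P.len + Q.len - 2 - t, show P.len + Q.len - 2 - t < P.len + Q.len - 2 by omega, ?_⟩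
      show s(Q.pts t, Q.pts (t + 1))
          = s(spliceFun P Q (P.len + Q.len - 2 - t), spliceFun P Q (P.len + Q.len - 2 - t + 1))
      rw [spliceFun_edge P Q hn hm ha (show P.len + Q.len - 2 - t < P.len + Q.len - 2 by omega),
        if_neg (show ¬ P.len + Q.len - 2 - t < P.len - 1 by omega),
        show P.len + Q.len - 2 - (P.len + Q.len - 2 - t) = t by omega]

end GridCycle

theorem stmt15 {V : Type*} [Fintype V] [DecidableEq V] (G : SimpleGraph V)
    (v w : V) (hvw : G.Adj v w)
    (rep : V → GridCycle) (hrep : IsClosedEPGRep G rep)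
    (e : Sym2 (ℤ × ℤ))
    (hshare : (rep v).edges ∩ (rep w).edges = {e})
    (hunique : ∀ u : V, u ≠ v → u ≠ w → e ∉ (rep u).edges)
    (G' : SimpleGraph {u : V // u ≠ w})
    (hG' : ∀ a b : {u : V // u ≠ w}, G'.Adj a b ↔ a ≠ b ∧
      (G.Adj ↑a ↑b ∨ ((a : V) = v ∧ G.Adj w ↑b) ∨ ((b : V) = v ∧ G.Adj ↑a w))) :
    ∃ rep' : {u : V // u ≠ w} → GridCycle,
      (∀ a : {u : V // u ≠ w}, (rep' a).edges =
        if (a : V) = v then ((rep v).edges ∪ (rep w).edges) \ {e}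
        else (rep (a : V)).edges) ∧
      IsClosedEPGRep G' rep' := by
  have hev : e ∈ (rep v).edges ∩ (rep w).edges := by rw [hshare]; exact rfl
  obtain ⟨⟨i, hi, hei⟩, j, hj, hej⟩ := hev
  have hn : 0 < (rep v).len := by omega
  have hm0 : 0 < (rep w).len := by omega
  have hm2 : 2 ≤ (rep w).len := (rep w).two_le_len hm0
  -- the rotated copy of path(v), starting with the shared edge e
  have hP : ∃ P : GridCycle, 0 < P.len ∧ P.edges = (rep v).edges ∧
      s(P.pts 0, P.pts 1) = e := by
    refine ⟨(rep v).rotate i hn, hn, GridCycle.edges_rotate _ _ _, ?_⟩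
    have h0 := GridCycle.rotate_edge (rep v) i hn 0
    have h1 : (i + 0) % (rep v).len = i := by
      rw [Nat.add_zero]; exact Nat.mod_eq_of_lt hi
    rw [h1] at h0
    have h0' : s(((rep v).rotate i hn).pts 0, ((rep v).rotate i hn).pts 1)
        = s((rep v).pts i, (rep v).pts (i + 1)) := h0
    exact h0'.trans hei.symm
  obtain ⟨P, hPn, hPE, hPe⟩ := hP
  -- a copy of path(w) starting with e, oriented compatibly with P
  have hQ : ∃ Q : GridCycle, 2 ≤ Q.len ∧ Q.edges = (rep w).edges ∧
      P.pts 0 = Q.pts 0 ∧ P.pts 1 = Q.pts 1 := by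
    have hRe : s(((rep w).rotate j hm0).pts 0, ((rep w).rotate j hm0).pts 1) = e := by
      have h0 := GridCycle.rotate_edge (rep w) j hm0 0
      have h1 : (j + 0) % (rep w).len = j := by
        rw [Nat.add_zero]; exact Nat.mod_eq_of_lt hj
      rw [h1] at h0
      have h0' : s(((rep w).rotate j hm0).pts 0, ((rep w).rotate j hm0).pts 1)
          = s((rep w).pts j, (rep w).pts (j + 1)) := h0
      exact h0'.trans hej.symm
    set R := (rep w).rotate j hm0 with hR
    rcases Sym2.eq_iff.mp (hRe.trans hPe.symm) with ⟨h1, h2⟩ | ⟨h1, h2⟩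
    · exact ⟨R, hm2, GridCycle.edges_rotate _ _ _, h1.symm, h2.symm⟩
    · refine ⟨(R.reverse).rotate ((rep w).len - 1) hm0, hm2, ?_, ?_, ?_⟩
      · exact (GridCycle.edges_rotate _ _ _).trans
          ((GridCycle.edges_reverse _).trans (GridCycle.edges_rotate _ _ _))
      · symm
        show (R.reverse).pts (((rep w).len - 1 + 0) % (rep w).len) = P.pts 0
        have e1 : ((rep w).len - 1 + 0) % (rep w).len = (rep w).len - 1 := by
          rw [Nat.add_zero]; exact Nat.mod_eq_of_lt (by omega)
        rw [e1]
        show R.pts ((rep w).len - ((rep w).len - 1) % (rep w).len) = P.pts 0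
        rw [Nat.mod_eq_of_lt (show (rep w).len - 1 < (rep w).len by omega),
          show (rep w).len - ((rep w).len - 1) = 1 by omega]
        exact h2
      · symm
        show (R.reverse).pts (((rep w).len - 1 + 1) % (rep w).len) = P.pts 1
        have e1 : ((rep w).len - 1 + 1) % (rep w).len = 0 := by
          rw [show (rep w).len - 1 + 1 = (rep w).len by omega]; exact Nat.mod_self _
        rw [e1]
        show R.pts ((rep w).len - 0 % (rep w).len) = P.pts 1
        rw [Nat.zero_mod, Nat.sub_zero]
        have hcl : R.pts ((rep w).len) = R.pts 0 := R.closed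
        rw [hcl]
        exact h1
  obtain ⟨Q, hQm, hQE, ha, hb⟩ := hQ
  have hint : P.edges ∩ Q.edges ⊆ {e} := by rw [hPE, hQE, hshare]
  set D := GridCycle.splice P Q hPn hQm ha hb e hPe hint with hD
  have hDE : D.edges = ((rep v).edges ∪ (rep w).edges) \ {e} := by
    rw [hD, GridCycle.edges_splice, hPE, hQE]
  refine ⟨fun a => if (a : V) = v then D else rep (a : V), ?_, ?_⟩
  · intro a
    show (if (a : V) = v then D else rep (a : V)).edges = _
    by_cases h : (a : V) = v
    · rw [if_pos h, if_pos h, hDE]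
    · rw [if_neg h, if_neg h]
  · intro a b
    show G'.Adj a b ↔ a ≠ b ∧
      ((if (a : V) = v then D else rep (a : V)).edges ∩
        (if (b : V) = v then D else rep (b : V)).edges).Nonempty
    rw [hG' a b]
    by_cases hab : a = b
    · subst hab
      simp
    · have hAB : (a : V) ≠ (b : V) := Subtype.coe_ne_coe.mpr hab
      simp only [ne_eq, hab, not_false_eq_true, true_and]
      by_cases hA : (a : V) = v <;> by_cases hB : (b : V) = v
      · exact absurd (hA.trans hB.symm) hAB
      · rw [if_pos hA, if_neg hB, hDE, hA]
        constructor
        · rintro (h | ⟨-, h⟩ | ⟨hc, -⟩)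
          · obtain ⟨x, hx1, hx2⟩ := ((hrep v ↑b).mp h).2
            exact ⟨x, ⟨⟨Or.inl hx1, fun hxe =>
              hunique ↑b hB b.2 ((show x = e from hxe) ▸ hx2)⟩, hx2⟩⟩
          · obtain ⟨x, hx1, hx2⟩ := ((hrep w ↑b).mp h).2
            exact ⟨x, ⟨⟨Or.inr hx1, fun hxe =>
              hunique ↑b hB b.2 ((show x = e from hxe) ▸ hx2)⟩, hx2⟩⟩
          · exact absurd hc hB
        · rintro ⟨x, ⟨⟨hx1 | hx1, -⟩, hx2⟩⟩
          · exact Or.inl ((hrep v ↑b).mpr ⟨fun hvb => hB hvb.symm, x, hx1, hx2⟩)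
          · exact Or.inr (Or.inl ⟨rfl,
              (hrep w ↑b).mpr ⟨fun hwb => b.2 hwb.symm, x, hx1, hx2⟩⟩)
      · rw [if_neg hA, if_pos hB, hDE, hB]
        constructor
        · rintro (h | ⟨hc, -⟩ | ⟨-, h⟩)
          · obtain ⟨x, hx1, hx2⟩ := ((hrep ↑a v).mp h).2
            exact ⟨x, ⟨hx1, ⟨Or.inl hx2, fun hxe =>
              hunique ↑a hA a.2 ((show x = e from hxe) ▸ hx1)⟩⟩⟩
          · exact absurd hc hA
          · obtain ⟨x, hx1, hx2⟩ := ((hrep ↑a w).mp h).2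
            exact ⟨x, ⟨hx1, ⟨Or.inr hx2, fun hxe =>
              hunique ↑a hA a.2 ((show x = e from hxe) ▸ hx1)⟩⟩⟩
        · rintro ⟨x, hx1, ⟨hx2 | hx2, -⟩⟩
          · exact Or.inl ((hrep ↑a v).mpr ⟨hA, x, hx1, hx2⟩)
          · exact Or.inr (Or.inr ⟨rfl, (hrep ↑a w).mpr ⟨a.2, x, hx1, hx2⟩⟩)
      · rw [if_neg hA, if_neg hB]
        constructor
        · rintro (h | ⟨hc, -⟩ | ⟨hc, -⟩)
          · exact ((hrep ↑a ↑b).mp h).2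
          · exact absurd hc hA
          · exact absurd hc hB
        · intro hne
          exact Or.inl ((hrep ↑a ↑b).mpr ⟨hAB, hne⟩)
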